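/- Let F(t,u) = ½ a(u,u) − ⟨f(t),u⟩ be the energy with T-monotone subdifferential, and consider one step of the truncated implicit Euler scheme: ũ ∈ argmin{F(t', w) + (1/(2τ))‖w − u‖²_{L²} : w ∈ H¹₀} and ṽ ∈ argmin{F(t', w) + (1/(2τ))‖w − v‖²_{L²} : w ∈ H¹₀}. If u ≤ v a.e., then ũ ≤ ṽ a.e., and consequently max{ũ, u} ≤ max{ṽ, v} a.e. -/

import Mathlib

open MeasureTheory

private lemma aux_lin_zero (L Q : ℝ) (h : ∀ t : ℝ, 0 ≤ t * L + t ^ 2 * Q) : L = 0 := by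
  by_contra hL
  have hQ : (0:ℝ) < |Q| + 1 := by positivity
  have hQ' := le_abs_self Q
  have hL2 : 0 < L ^ 2 := by positivity
  have h1 := h (-(L / (|Q| + 1)))
  have h2 : 0 ≤ (-(L / (|Q| + 1)) * L + (-(L / (|Q| + 1))) ^ 2 * Q) * (|Q| + 1) ^ 2 :=
    mul_nonneg h1 (by positivity)
  have h3 : (-(L / (|Q| + 1)) * L + (-(L / (|Q| + 1))) ^ 2 * Q) * (|Q| + 1) ^ 2
      = -L ^ 2 * (|Q| + 1) + L ^ 2 * Q := by
    field_simp
  rw [h3] at h2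
  nlinarith [mul_le_mul_of_nonneg_left hQ' (le_of_lt hL2)]

private lemma aux_inner_nonneg {α : Type*} [MeasurableSpace α] {μ : Measure α}
    (f g : Lp ℝ 2 μ) (hf : 0 ≤ f) (hg : 0 ≤ g) : 0 ≤ (inner ℝ f g : ℝ) := by
  rw [MeasureTheory.L2.inner_def]
  apply integral_nonneg_of_ae
  filter_upwards [(Lp.coeFn_nonneg f).mpr hf, (Lp.coeFn_nonneg g).mpr hg] with x hfx hgx
  simpa using mul_nonneg hgx hfx

private lemma aux_inner_sup_self {α : Type*} [MeasurableSpace α] {μ : Measure α}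
    (f : Lp ℝ 2 μ) : (inner ℝ f (f ⊔ 0) : ℝ) = ‖f ⊔ 0‖ ^ 2 := by
  rw [← real_inner_self_eq_norm_sq, MeasureTheory.L2.inner_def, MeasureTheory.L2.inner_def]
  apply integral_congr_ae
  filter_upwards [Lp.coeFn_sup f 0, Lp.coeFn_zero ℝ 2 μ] with x h1 h2
  have hx : (f ⊔ 0) x = max (f x) 0 := by
    rw [h1]; simp only [Pi.sup_apply, h2, Pi.zero_apply]
  simp only [RCLike.inner_apply, RCLike.conj_to_real, hx]
  rcases le_total (f x) 0 with h | h
  · simp [max_eq_right h]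
  · simp [max_eq_left h]

private lemma aux_EL {α : Type*} [MeasurableSpace α] {μ : Measure α}
    {V : Type*} [NormedAddCommGroup V] [NormedSpace ℝ V]
    (ι : V →L[ℝ] Lp ℝ 2 μ)
    (a : V →L[ℝ] V →L[ℝ] ℝ) (hsymm : ∀ u v : V, a u v = a v u)
    (τ : ℝ) (hτ : 0 < τ) (g : Lp ℝ 2 μ) (u0 ut : V)
    (hmin : ∀ w : V,
      (1/2) * a ut ut - (inner ℝ g (ι ut) : ℝ) + (1/(2*τ)) * ‖ι ut - ι u0‖ ^ 2 ≤
        (1/2) * a w w - (inner ℝ g (ι w) : ℝ) + (1/(2*τ)) * ‖ι w - ι u0‖ ^ 2)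
    (w : V) :
    a ut w - (inner ℝ g (ι w) : ℝ) + (1/τ) * (inner ℝ (ι ut - ι u0) (ι w) : ℝ) = 0 := by
  apply aux_lin_zero _ ((1/2) * a w w + (1/(2*τ)) * ‖ι w‖ ^ 2)
  intro t
  have hτ' : τ ≠ 0 := ne_of_gt hτ
  have e1 : a (ut + t • w) (ut + t • w)
      = a ut ut + 2 * t * a ut w + t ^ 2 * a w w := by
    simp only [map_add, _root_.map_smul, ContinuousLinearMap.add_apply,
      ContinuousLinearMap.smul_apply, smul_eq_mul]
    rw [hsymm w ut]; ring
  have e2 : (inner ℝ g (ι (ut + t • w)) : ℝ)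
      = (inner ℝ g (ι ut) : ℝ) + t * (inner ℝ g (ι w) : ℝ) := by
    rw [map_add, _root_.map_smul, inner_add_right, real_inner_smul_right]
  have e3 : ‖ι (ut + t • w) - ι u0‖ ^ 2
      = ‖ι ut - ι u0‖ ^ 2 + 2 * t * (inner ℝ (ι ut - ι u0) (ι w) : ℝ) + t ^ 2 * ‖ι w‖ ^ 2 := by
    have hv : ι (ut + t • w) - ι u0 = (ι ut - ι u0) + t • (ι w) := by
      rw [map_add, _root_.map_smul, add_sub_right_comm]
    rw [hv, @norm_add_sq_real, real_inner_smul_right, norm_smul]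
    simp [mul_pow, sq_abs]
    ring
  have h := hmin (ut + t • w)
  rw [e1, e2, e3] at h
  have key : (1/2) * (a ut ut + 2 * t * a ut w + t ^ 2 * a w w)
      - ((inner ℝ g (ι ut) : ℝ) + t * (inner ℝ g (ι w) : ℝ))
      + (1/(2*τ)) * (‖ι ut - ι u0‖ ^ 2 + 2 * t * (inner ℝ (ι ut - ι u0) (ι w) : ℝ)
          + t ^ 2 * ‖ι w‖ ^ 2)
      = ((1/2) * a ut ut - (inner ℝ g (ι ut) : ℝ) + (1/(2*τ)) * ‖ι ut - ι u0‖ ^ 2)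
        + (t * (a ut w - (inner ℝ g (ι w) : ℝ) + (1/τ) * (inner ℝ (ι ut - ι u0) (ι w) : ℝ))
          + t ^ 2 * ((1/2) * a w w + (1/(2*τ)) * ‖ι w‖ ^ 2)) := by
    field_simp
    ring
  rw [key] at h
  linarith

/-- Comparison principle for one step of the truncated implicit Euler scheme: with the
T-monotone quadratic energy `F(w) = ½a(w,w) − ⟨g, w⟩`, if `ũ` and `ṽ` minimize
`w ↦ F(w) + (1/2τ)‖w − u‖²_{L²}` and `w ↦ F(w) + (1/2τ)‖w − v‖²_{L²}` respectively, and
`u ≤ v` a.e., then `ũ ≤ ṽ` a.e. and hence `max{ũ,u} ≤ max{ṽ,v}` a.e.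
`H¹₀` is a normed space `V` embedded in `L²` by `ι`; the lattice structure of `H¹₀` is encoded
by a positive-part map `P : V → V` with `ι(P w) = (ι w)⁺`, and T-monotonicity reads
`a(w, P w) ≥ 0`. -/
theorem euler_step_comparison
    {α : Type*} [MeasurableSpace α] (μ : Measure α)
    {V : Type*} [NormedAddCommGroup V] [NormedSpace ℝ V]
    (ι : V →L[ℝ] Lp ℝ 2 μ)
    (a : V →L[ℝ] V →L[ℝ] ℝ) (hsymm : ∀ u v : V, a u v = a v u)
    (P : V → V) (hP : ∀ w : V, ι (P w) = (ι w) ⊔ 0)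
    (hTmon : ∀ w : V, 0 ≤ a w (P w))
    (τ : ℝ) (hτ : 0 < τ) (g : Lp ℝ 2 μ)
    (u v utld vtld : V)
    (hu : ∀ w : V,
      (1/2) * a utld utld - (inner ℝ g (ι utld) : ℝ) + (1/(2*τ)) * ‖ι utld - ι u‖ ^ 2 ≤
        (1/2) * a w w - (inner ℝ g (ι w) : ℝ) + (1/(2*τ)) * ‖ι w - ι u‖ ^ 2)
    (hv : ∀ w : V,
      (1/2) * a vtld vtld - (inner ℝ g (ι vtld) : ℝ) + (1/(2*τ)) * ‖ι vtld - ι v‖ ^ 2 ≤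
        (1/2) * a w w - (inner ℝ g (ι w) : ℝ) + (1/(2*τ)) * ‖ι w - ι v‖ ^ 2)
    (huv : ι u ≤ ι v) :
    ι utld ≤ ι vtld ∧ (ι utld ⊔ ι u) ≤ (ι vtld ⊔ ι v) := by
  set p := P (utld - vtld) with hp
  have hz : ι p = (ι utld - ι vtld) ⊔ 0 := by rw [hp, hP, map_sub]
  have h1 := aux_EL ι a hsymm τ hτ g u utld hu p
  have h2 := aux_EL ι a hsymm τ hτ g v vtld hv p
  have h3 : a utld p - a vtld p = a (utld - vtld) p := by
    simp [map_sub, ContinuousLinearMap.sub_apply]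
  have hdiff : (ι utld - ι u) - (ι vtld - ι v) = (ι utld - ι vtld) + (ι v - ι u) := by abel
  have hinner : (inner ℝ (ι utld - ι u) (ι p) : ℝ) - (inner ℝ (ι vtld - ι v) (ι p) : ℝ)
      = (inner ℝ (ι utld - ι vtld) (ι p) : ℝ) + (inner ℝ (ι v - ι u) (ι p) : ℝ) := by
    rw [← inner_sub_left, hdiff, inner_add_left]
  have h4 : (inner ℝ (ι utld - ι vtld) (ι p) : ℝ) = ‖ι p‖ ^ 2 := by
    rw [hz]; exact aux_inner_sup_self _
  have h5 : 0 ≤ (inner ℝ (ι v - ι u) (ι p) : ℝ) :=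
    aux_inner_nonneg _ _ (sub_nonneg.mpr huv) (by rw [hz]; exact le_sup_right)
  have hsum : a (utld - vtld) p
      + (1/τ) * (‖ι p‖ ^ 2 + (inner ℝ (ι v - ι u) (ι p) : ℝ)) = 0 := by
    linear_combination h1 - h2 - h3 - (1/τ) * hinner - (1/τ) * h4
  have hmon := hTmon (utld - vtld)
  rw [← hp] at hmon
  have hτ' : (0:ℝ) < 1/τ := one_div_pos.mpr hτ
  have hn : ‖ι p‖ ^ 2 ≤ 0 := by nlinarith
  have hz0 : ι p = 0 := norm_eq_zero.mp (by nlinarith [norm_nonneg (ι p)])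
  have hle : ι utld ≤ ι vtld := by
    have h0 : (ι utld - ι vtld) ⊔ 0 = 0 := by rw [← hz, hz0]
    exact sub_nonpos.mp (sup_eq_right.mp h0)
  exact ⟨hle, sup_le_sup hle huv⟩
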